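/- Let a, σ̃ > 0 and b > 0. Suppose h : ℝ → ℝ is twice differentiable with h(r) > 0, h'(r) > 0 and h''(r) > 0 for all r ∈ ℝ, and h satisfies (σ̃²/2)·h''(r) + a(b − r)·h'(r) = b·h(r) for all r. Then there exists a unique r* ∈ ℝ such that h'(r*)/h(r*) = 1/a, and this r* satisfies r* > 0. -/

import Mathlib

open Real Filter Set

/-- Let `a, σ̃ > 0` and `b > 0`. Suppose `h : ℝ → ℝ` is twice differentiable with
`h(r) > 0`, `h'(r) > 0` and `h''(r) > 0` for all `r`, and satisfies
`(σ̃²/2) h''(r) + a (b − r) h'(r) = b h(r)` for all `r`. Then there exists a unique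
`r*` with `h'(r*)/h(r*) = 1/a`, and this `r*` satisfies `r* > 0`. -/
theorem exists_unique_barrier (a σt b : ℝ) (ha : 0 < a) (hσ : 0 < σt) (hb : 0 < b)
    (h h' h'' : ℝ → ℝ)
    (hd1 : ∀ r : ℝ, HasDerivAt h (h' r) r)
    (hd2 : ∀ r : ℝ, HasDerivAt h' (h'' r) r)
    (hpos : ∀ r : ℝ, 0 < h r)
    (hpos' : ∀ r : ℝ, 0 < h' r)
    (hpos'' : ∀ r : ℝ, 0 < h'' r)
    (hode : ∀ r : ℝ, σt ^ 2 / 2 * h'' r + a * (b - r) * h' r = b * h r) :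
    ∃ rs : ℝ, (h' rs / h rs = 1 / a ∧ 0 < rs) ∧
      ∀ r : ℝ, h' r / h r = 1 / a → r = rs := by
  have hσ2 : (0:ℝ) < σt ^ 2 := by positivity
  set c : ℝ := 2 * a * b / σt ^ 2 with hc
  set r0 : ℝ := σt ^ 2 / (2 * a ^ 2) with hr0
  have hcpos : 0 < c := by positivity
  have hr0pos : 0 < r0 := by positivity
  set w : ℝ → ℝ := fun r => a * h' r - h r with hwdef
  set v : ℝ → ℝ := fun r => Real.exp (c * r) * w r with hvdef
  -- derivative of v
  have hvderiv : ∀ r : ℝ, HasDerivAt v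
      (Real.exp (c * r) * ((2 * a ^ 2 * r / σt ^ 2 - 1) * h' r)) r := by
    intro r
    have hwd : HasDerivAt w (a * h'' r - h' r) r := ((hd2 r).const_mul a).sub (hd1 r)
    have he : HasDerivAt (fun r : ℝ => Real.exp (c * r)) (c * Real.exp (c * r)) r := by
      simpa [mul_comm] using ((hasDerivAt_id r).const_mul c).exp
    have hmul := he.mul hwd
    refine hmul.congr_deriv ?_
    have hkey : (2 * a ^ 2 * r / σt ^ 2 - 1) * h' r
        = c * (a * h' r - h r) + (a * h'' r - h' r) := by
      rw [hc]
      field_simp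
      linear_combination (-2 * a) * hode r
    simp only [hwdef]
    rw [hkey]; ring
  have hvdiff : Differentiable ℝ v := fun r => (hvderiv r).differentiableAt
  have hvderiv' : ∀ r : ℝ, deriv v r
      = Real.exp (c * r) * ((2 * a ^ 2 * r / σt ^ 2 - 1) * h' r) := fun r => (hvderiv r).deriv
  -- w 0 < 0
  have hw0 : w 0 < 0 := by
    show a * h' 0 - h 0 < 0
    nlinarith [hode 0, mul_pos hσ2 (hpos'' 0), hpos' 0, hpos 0, hb]
  -- any zero of w is positive
  have hzero_pos : ∀ r : ℝ, w r = 0 → 0 < r := by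
    intro r hr
    have hode' := hode r
    have hwr : a * h' r = h r := by simpa [hwdef, sub_eq_zero] using hr
    nlinarith [mul_pos hσ2 (hpos'' r), mul_pos ha (hpos' r)]
  -- strict antitone on Iic r0
  have hanti : StrictAntiOn v (Iic r0) := by
    apply strictAntiOn_of_deriv_neg (convex_Iic r0) hvdiff.continuous.continuousOn
    intro x hx
    rw [interior_Iic] at hx
    rw [hvderiv' x]
    have hfac : 2 * a ^ 2 * x / σt ^ 2 - 1 < 0 := by
      rw [sub_neg, div_lt_one hσ2]
      have : x < r0 := hx
      rw [hr0, lt_div_iff₀ (by positivity)] at this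
      linarith
    exact mul_neg_of_pos_of_neg (Real.exp_pos _) (mul_neg_of_neg_of_pos hfac (hpos' x))
  -- strict monotone on Ici r0
  have hmono : StrictMonoOn v (Ici r0) := by
    apply strictMonoOn_of_deriv_pos (convex_Ici r0) hvdiff.continuous.continuousOn
    intro x hx
    rw [interior_Ici] at hx
    rw [hvderiv' x]
    have hfac : 0 < 2 * a ^ 2 * x / σt ^ 2 - 1 := by
      rw [sub_pos, lt_div_iff₀ hσ2]
      have : r0 < x := hx
      rw [hr0, div_lt_iff₀ (by positivity)] at this
      linarith
    have := hpos' x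
    positivity
  -- all zeros of w are > r0
  have hzero_gt : ∀ r : ℝ, w r = 0 → r0 < r := by
    intro r hr
    by_contra hle
    push_neg at hle
    have hrpos := hzero_pos r hr
    have hv0 : v 0 = w 0 := by simp [hvdef]
    have hvr : v r = 0 := by simp [hvdef, hr]
    have : v r < v 0 := hanti (le_of_lt hr0pos) hle hrpos
    rw [hvr, hv0] at this
    linarith
  -- existence of a point where v is positive
  have hmono' : StrictMono h' := by
    apply strictMono_of_deriv_pos
    intro x
    rw [(hd2 x).deriv]
    exact hpos'' x
  set r1 : ℝ := r0 + 1 with hr1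
  set m : ℝ := Real.exp (c * r1) * (2 * a ^ 2 / σt ^ 2 * h' r1) with hm
  have hmpos : 0 < m := mul_pos (Real.exp_pos _) (mul_pos (by positivity) (hpos' r1))
  have hbound : ∀ x ∈ interior (Ici r1), m ≤ deriv v x := by
    intro x hx
    rw [interior_Ici] at hx
    have hx1 : r1 < x := hx
    rw [hvderiv' x]
    have h1 : Real.exp (c * r1) ≤ Real.exp (c * x) :=
      Real.exp_le_exp.2 (by nlinarith)
    have h2 : 2 * a ^ 2 / σt ^ 2 ≤ 2 * a ^ 2 * x / σt ^ 2 - 1 := by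
      rw [hr1, hr0] at hx1
      rw [div_add' _ _ _ (ne_of_gt (by positivity : (0:ℝ) < 2 * a ^ 2))] at hx1
      rw [div_lt_iff₀ (by positivity : (0:ℝ) < 2 * a ^ 2)] at hx1
      rw [le_sub_iff_add_le, div_add' _ _ _ (ne_of_gt hσ2), div_le_div_iff₀ hσ2 hσ2]
      nlinarith
    have h3 : h' r1 ≤ h' x := le_of_lt (hmono' hx1)
    have h2pos : (0:ℝ) < 2 * a ^ 2 / σt ^ 2 := by positivity
    calc m ≤ Real.exp (c * r1) * ((2 * a ^ 2 * x / σt ^ 2 - 1) * h' x) := by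
            rw [hm]
            apply mul_le_mul_of_nonneg_left _ (le_of_lt (Real.exp_pos _))
            apply mul_le_mul h2 h3 (le_of_lt (hpos' r1)) (by linarith)
      _ ≤ Real.exp (c * x) * ((2 * a ^ 2 * x / σt ^ 2 - 1) * h' x) := by
            apply mul_le_mul_of_nonneg_right h1
            have := hpos' x
            nlinarith
  set R : ℝ := r1 + (1 + |v r1|) / m with hR
  have hRge : r1 ≤ R := by
    rw [hR]
    have : 0 ≤ (1 + |v r1|) / m := by positivity
    linarith
  have hgrow := (convex_Ici r1).mul_sub_le_image_sub_of_le_deriv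
    hvdiff.continuous.continuousOn hvdiff.differentiableOn hbound
    r1 (self_mem_Ici) R hRge hRge
  have hvR : 0 < v R := by
    have hmR : m * (R - r1) = 1 + |v r1| := by
      rw [hR]; field_simp; ring
    rw [hmR] at hgrow
    have := neg_abs_le (v r1)
    linarith
  have hwR : 0 < w R := by
    have : v R = Real.exp (c * R) * w R := rfl
    nlinarith [Real.exp_pos (c * R)]
  -- IVT
  have hRpos : 0 < R := by
    have : 0 < r1 := by rw [hr1]; linarith
    linarith
  have hwdiff : Differentiable ℝ w := fun r => (((hd2 r).const_mul a).sub (hd1 r)).differentiableAt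
  have hwcont : ContinuousOn w (Icc 0 R) := hwdiff.continuous.continuousOn
  have hmem : (0:ℝ) ∈ Icc (w 0) (w R) := ⟨le_of_lt hw0, le_of_lt hwR⟩
  obtain ⟨rs, hrsmem, hrs0⟩ := intermediate_value_Icc (le_of_lt hRpos) hwcont hmem
  have hrspos : 0 < rs := hzero_pos rs hrs0
  have hrsgt : r0 < rs := hzero_gt rs hrs0
  have hrseq : a * h' rs = h rs := by
    have := hrs0
    simp only [hwdef] at this
    linarith
  refine ⟨rs, ⟨?_, hrspos⟩, ?_⟩
  · rw [div_eq_div_iff (ne_of_gt (hpos rs)) (ne_of_gt ha)]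
    linarith
  · intro r hr
    have hwr : w r = 0 := by
      rw [div_eq_div_iff (ne_of_gt (hpos r)) (ne_of_gt ha)] at hr
      simp only [hwdef]
      linarith
    have hrgt : r0 < r := hzero_gt r hwr
    have hv1 : v r = 0 := by simp [hvdef, hwr]
    have hv2 : v rs = 0 := by simp [hvdef, hrs0]
    exact hmono.injOn (le_of_lt hrgt) (le_of_lt hrsgt) (by rw [hv1, hv2])
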